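/- Let k be a field with 1/2 ∈ k, let A = k[[x_1,...,x_d]], B = A[[x_0]], and let F = x_0² + x_1² + ... + x_d² + G with G ∈ m_B³, where m_B is the maximal ideal of B. Then there exist a unit v_0 ∈ B, an element a_0 ∈ (x_1,...,x_d)B, and G_1 ∈ (x_1,...,x_d)³B such that F = v_0(x_0 + a_0)² + x_1² + ... + x_d² + G_1. -/

import Mathlib

open MvPowerSeries

namespace Stmt2Aux

variable {k : Type*} [Field k] {d : ℕ}

/-- The ideal of power series whose coefficients vanish on monomials of `T`-weight `< r`. -/
def Jw (k : Type*) [Field k] (d : ℕ) (T : Finset (Fin (d + 1))) (r : ℕ) :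
    Ideal (MvPowerSeries (Fin (d + 1)) k) where
  carrier := {f | ∀ m : Fin (d + 1) →₀ ℕ, (∑ i ∈ T, m i) < r → coeff m f = 0}
  add_mem' := fun ha hb m hm => by rw [map_add, ha m hm, hb m hm, add_zero]
  zero_mem' := fun m _ => by simp
  smul_mem' := by
    intro c f hf m hm
    rw [smul_eq_mul, coeff_mul]
    apply Finset.sum_eq_zero
    rintro ⟨p, q⟩ hpq
    rw [Finset.HasAntidiagonal.mem_antidiagonal] at hpq
    have hq : (∑ i ∈ T, q i) < r := by
      refine lt_of_le_of_lt (Finset.sum_le_sum fun i _ => ?_) hm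
      rw [← hpq, Finsupp.add_apply]; exact Nat.le_add_left _ _
    rw [hf q hq, mul_zero]

theorem mem_Jw_iff {T : Finset (Fin (d + 1))} {r : ℕ} {f : MvPowerSeries (Fin (d + 1)) k} :
    f ∈ Jw k d T r ↔ ∀ m : Fin (d + 1) →₀ ℕ, (∑ i ∈ T, m i) < r → coeff m f = 0 :=
  Iff.rfl

theorem Jw_mul_le (T : Finset (Fin (d + 1))) (a b : ℕ) :
    Jw k d T a * Jw k d T b ≤ Jw k d T (a + b) := by
  rw [Ideal.mul_le]
  intro f hf g hg m hm
  rw [coeff_mul]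
  apply Finset.sum_eq_zero
  rintro ⟨p, q⟩ hpq
  rw [Finset.HasAntidiagonal.mem_antidiagonal] at hpq
  have hsum : (∑ i ∈ T, p i) + (∑ i ∈ T, q i) = ∑ i ∈ T, m i := by
    rw [← hpq, ← Finset.sum_add_distrib]
    exact Finset.sum_congr rfl fun i _ => rfl
  rcases Nat.lt_or_ge (∑ i ∈ T, p i) a with h | h
  · rw [hf p h, zero_mul]
  · have : (∑ i ∈ T, q i) < b := by omega
    rw [hg q this, mul_zero]

theorem maximalIdeal_le_Jw :
    IsLocalRing.maximalIdeal (MvPowerSeries (Fin (d + 1)) k) ≤ Jw k d Finset.univ 1 := by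
  intro f hf m hm
  have hm0 : m = 0 := by
    ext i
    have h0 : (∑ i, m i) = 0 := Nat.lt_one_iff.mp hm
    exact (Finset.sum_eq_zero_iff.mp h0) i (Finset.mem_univ i)
  subst hm0
  have hnu : ¬ IsUnit f := hf
  rw [MvPowerSeries.isUnit_iff_constantCoeff] at hnu
  rw [MvPowerSeries.coeff_zero_eq_constantCoeff]
  by_contra h
  exact hnu (isUnit_iff_ne_zero.mpr h)

theorem maximalIdeal_pow3_le :
    (IsLocalRing.maximalIdeal (MvPowerSeries (Fin (d + 1)) k)) ^ 3 ≤ Jw k d Finset.univ 3 := by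
  refine le_trans (Ideal.pow_right_mono (maximalIdeal_le_Jw (k := k) (d := d)) 3) ?_
  have h3 : (Jw k d Finset.univ 1) ^ 3 = Jw k d Finset.univ 1 * Jw k d Finset.univ 1 *
      Jw k d Finset.univ 1 := by ring
  rw [h3]
  refine le_trans (Ideal.mul_mono (Jw_mul_le _ 1 1) le_rfl) ?_
  exact Jw_mul_le _ 2 1

theorem sum_split {M : Type*} [AddCommMonoid M] (f : Fin (d + 1) → M) :
    ∑ i, f i = f 0 + ∑ i ∈ Finset.univ.filter (fun i : Fin (d + 1) => i ≠ 0), f i := by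
  rw [← Finset.sum_filter_add_sum_filter_not Finset.univ (fun i : Fin (d + 1) => i ≠ 0) f]
  rw [add_comm]
  congr 1
  rw [show Finset.univ.filter (fun i : Fin (d + 1) => ¬ i ≠ 0) = {0} by ext i; simp,
    Finset.sum_singleton]

theorem sub_add_single_cancel {m : Fin (d + 1) →₀ ℕ} {i : Fin (d + 1)} {a : ℕ} (h : a ≤ m i) :
    m - Finsupp.single i a + Finsupp.single i a = m := by
  ext j
  rcases eq_or_ne j i with rfl | hji
  · simp [Finsupp.tsub_apply, Nat.sub_add_cancel h]
  · simp [Finsupp.tsub_apply, Finsupp.single_apply, Ne.symm hji]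

/-- Key lemma: coefficientwise low-degree vanishing (w.r.t. the variables `≠ 0`)
implies membership in the corresponding power of the span ideal. -/
theorem mem_pow_span (r : ℕ) (f : MvPowerSeries (Fin (d + 1)) k)
    (hf : f ∈ Jw k d (Finset.univ.filter (fun i : Fin (d + 1) => i ≠ 0)) r) :
    f ∈ (Ideal.span {q : MvPowerSeries (Fin (d + 1)) k | ∃ i : Fin (d + 1), i ≠ 0 ∧ q = X i}) ^ r := by
  classical
  induction r generalizing f with
  | zero => rw [pow_zero, Ideal.one_eq_top]; trivial
  | succ r ih =>
    set S := Finset.univ.filter (fun i : Fin (d + 1) => i ≠ 0) with hS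
    set g : Fin (d + 1) → MvPowerSeries (Fin (d + 1)) k := fun i m =>
      if i ≠ 0 ∧ ∀ j, j < i → j ≠ 0 → m j = 0 then coeff (m + Finsupp.single i 1) f else 0
      with hgdef
    have hcoeffg : ∀ i m, coeff m (g i) =
        if i ≠ 0 ∧ ∀ j, j < i → j ≠ 0 → m j = 0 then coeff (m + Finsupp.single i 1) f else 0 :=
      fun i m => rfl
    have hdec : f = ∑ i ∈ S, X i * g i := by
      ext m
      rw [map_sum]
      have hterm : ∀ i ∈ S, coeff m (X i * g i) =
          if 1 ≤ m i then coeff (m - Finsupp.single i 1) (g i) else 0 := by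
        intro i _
        rw [X_def, coeff_monomial_mul]
        simp [Finsupp.single_le_iff]
      by_cases hz : ∀ i ∈ S, m i = 0
      · have h0 : coeff m f = 0 := by
          refine hf m ?_
          have : (∑ i ∈ S, m i) = 0 := Finset.sum_eq_zero hz
          omega
        rw [h0, Finset.sum_congr rfl hterm, Finset.sum_eq_zero]
        intro i hi
        rw [if_neg]
        rw [hz i hi]
        omega
      · push_neg at hz
        set T := S.filter (fun i => m i ≠ 0) with hT
        have hTne : T.Nonempty := by
          obtain ⟨i, hiS, hine⟩ := hz
          exact ⟨i, Finset.mem_filter.mpr ⟨hiS, hine⟩⟩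
        set i0 := T.min' hTne with hi0
        have hi0T : i0 ∈ T := T.min'_mem hTne
        have hi0S : i0 ∈ S := (Finset.mem_filter.mp hi0T).1
        have hi0ne : m i0 ≠ 0 := (Finset.mem_filter.mp hi0T).2
        have hi0z : i0 ≠ 0 := by
          have := Finset.mem_filter.mp hi0S; exact this.2
        rw [Finset.sum_congr rfl hterm, Finset.sum_eq_single i0]
        · rw [if_pos (by omega), hcoeffg]
          rw [if_pos, sub_add_single_cancel (by omega)]
          refine ⟨hi0z, fun j hj hjz => ?_⟩
          have hjS : j ∈ S := Finset.mem_filter.mpr ⟨Finset.mem_univ _, hjz⟩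
          have hjT : j ∉ T := fun hjT => absurd (T.min'_le j hjT) (by rw [← hi0]; exact not_le.mpr hj)
          have hjm : m j = 0 := by
            by_contra h
            exact hjT (Finset.mem_filter.mpr ⟨hjS, h⟩)
          rw [Finsupp.tsub_apply, hjm, Finsupp.single_apply, if_neg (by rintro rfl; exact absurd hj (lt_irrefl _))]
          rfl
        · intro i hiS hii0
          by_cases him : m i = 0
          · rw [if_neg (by omega)]
          · rw [if_pos (by omega), hcoeffg, if_neg]
            rintro ⟨hiz, hall⟩
            have hiT : i ∈ T := Finset.mem_filter.mpr ⟨hiS, him⟩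
            have : i0 < i := lt_of_le_of_ne (T.min'_le i hiT) (Ne.symm hii0)
            have := hall i0 this hi0z
            rw [Finsupp.tsub_apply, Finsupp.single_apply, if_neg hii0] at this
            simp at this
            exact hi0ne this
        · intro hi0S'
          exact absurd hi0S hi0S'
    have hgmem : ∀ i ∈ S, g i ∈ Jw k d S r := by
      intro i hiS m hm
      rw [hcoeffg]
      split_ifs with h
      · have hiz : i ≠ 0 := h.1
        set n : Fin (d + 1) →₀ ℕ := m + Finsupp.single i 1 with hn
        have hsum : (∑ j ∈ S, n j) = (∑ j ∈ S, m j) + 1 := by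
          have h1 : ∀ j ∈ S, n j = m j + (Finsupp.single i 1 : Fin (d + 1) →₀ ℕ) j := by
            intro j _; rw [hn, Finsupp.add_apply]
          rw [Finset.sum_congr rfl h1, Finset.sum_add_distrib]
          congr 1
          rw [Finset.sum_eq_single i]
          · simp
          · intro j _ hji; simp [Finsupp.single_apply, Ne.symm hji]
          · intro h'; exact absurd hiS h'
        exact hf n (by omega)
      · rfl
    rw [hdec, pow_succ']
    refine Ideal.sum_mem _ fun i hiS => ?_
    refine Ideal.mul_mem_mul ?_ (ih _ (hgmem i hiS))
    exact Ideal.subset_span ⟨i, (Finset.mem_filter.mp hiS).2, rfl⟩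

end Stmt2Aux

/-- Lemma 3.1 (Lemma `claim`): if `F = x_0² + ⋯ + x_d² + G` with `G ∈ m_B³` in
`B = k[[x_0,…,x_d]]` and `1/2 ∈ k`, then `F = v₀(x₀+a₀)² + x₁² + ⋯ + x_d² + G₁`
with `v₀` a unit, `a₀ ∈ (x_1,…,x_d)B` and `G₁ ∈ (x_1,…,x_d)³B`. -/
theorem stmt_2 (k : Type*) [Field k] (h2 : IsUnit (2 : k)) (d : ℕ)
    (G : MvPowerSeries (Fin (d + 1)) k)
    (hG : G ∈ (IsLocalRing.maximalIdeal (MvPowerSeries (Fin (d + 1)) k)) ^ 3)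
    (F : MvPowerSeries (Fin (d + 1)) k)
    (hF : F = (∑ i : Fin (d + 1), (X i) ^ 2) + G) :
    ∃ (v0 : (MvPowerSeries (Fin (d + 1)) k)ˣ) (a0 G1 : MvPowerSeries (Fin (d + 1)) k),
      a0 ∈ Ideal.span {q : MvPowerSeries (Fin (d + 1)) k | ∃ i : Fin (d + 1), i ≠ 0 ∧ q = X i} ∧
      G1 ∈ (Ideal.span {q : MvPowerSeries (Fin (d + 1)) k |
              ∃ i : Fin (d + 1), i ≠ 0 ∧ q = X i}) ^ 3 ∧
      F = (v0 : MvPowerSeries (Fin (d + 1)) k) * (X 0 + a0) ^ 2 +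
          (∑ i ∈ Finset.univ.filter (fun i : Fin (d + 1) => i ≠ 0), (X i) ^ 2) + G1 := by
  classical
  set I := Ideal.span {q : MvPowerSeries (Fin (d + 1)) k | ∃ i : Fin (d + 1), i ≠ 0 ∧ q = X i}
    with hI
  have hsum_single : ∀ (a : Fin (d + 1)) (b : ℕ),
      (∑ i, (Finsupp.single a b : Fin (d + 1) →₀ ℕ) i) = b := by
    intro a b; simp [Finsupp.single_apply]
  have hGc : ∀ m : Fin (d + 1) →₀ ℕ, (∑ i, m i) < 3 → coeff m G = 0 :=
    fun m hm => Stmt2Aux.maximalIdeal_pow3_le hG m hm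
  set g0 : MvPowerSeries (Fin (d + 1)) k :=
    fun m => if m 0 = 0 then coeff m G else 0 with hg0
  set g1 : MvPowerSeries (Fin (d + 1)) k :=
    fun m => if m 0 = 0 then coeff (m + Finsupp.single 0 1) G else 0 with hg1
  set c : MvPowerSeries (Fin (d + 1)) k :=
    fun m => coeff (m + Finsupp.single 0 2) G with hc
  have hcoeff_g0 : ∀ m, coeff m g0 = if m 0 = 0 then coeff m G else 0 := fun m => rfl
  have hcoeff_g1 : ∀ m, coeff m g1 =
      if m 0 = 0 then coeff (m + Finsupp.single 0 1) G else 0 := fun m => rfl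
  have hcoeff_c : ∀ m, coeff m c = coeff (m + Finsupp.single 0 2) G := fun m => rfl
  -- total-degree computations for shifted monomials
  have hshift : ∀ (m : Fin (d + 1) →₀ ℕ) (b : ℕ),
      (∑ i, (m + Finsupp.single 0 b : Fin (d + 1) →₀ ℕ) i) = (∑ i, m i) + b := by
    intro m b
    have h1 : ∀ j ∈ Finset.univ, (m + Finsupp.single 0 b : Fin (d + 1) →₀ ℕ) j
        = m j + (Finsupp.single 0 b : Fin (d + 1) →₀ ℕ) j := fun j _ => rfl
    rw [Finset.sum_congr rfl h1, Finset.sum_add_distrib, hsum_single]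
  -- decomposition of G
  have hdec : G = g0 + g1 * X 0 + c * (X 0) ^ 2 := by
    ext m
    have hX1 : coeff m (g1 * X 0) =
        if Finsupp.single 0 1 ≤ m then coeff (m - Finsupp.single 0 1) g1 * 1 else 0 := by
      rw [X_def, coeff_mul_monomial]
    have hX2 : coeff m (c * (X 0) ^ 2) =
        if Finsupp.single 0 2 ≤ m then coeff (m - Finsupp.single 0 2) c * 1 else 0 := by
      rw [X_pow_eq, coeff_mul_monomial]
    rw [map_add, map_add, hX1, hX2, hcoeff_g0]
    by_cases h0 : m 0 = 0
    · rw [if_pos h0, if_neg (by rw [Finsupp.single_le_iff]; omega),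
        if_neg (by rw [Finsupp.single_le_iff]; omega), add_zero, add_zero]
    · by_cases h1 : m 0 = 1
      · rw [if_neg h0, if_pos (Finsupp.single_le_iff.mpr (by omega)),
          if_neg (by rw [Finsupp.single_le_iff]; omega), hcoeff_g1]
        rw [if_pos (by rw [Finsupp.tsub_apply, Finsupp.single_eq_same, h1]),
          Stmt2Aux.sub_add_single_cancel (by omega)]
        ring
      · have h2' : 2 ≤ m 0 := by omega
        rw [if_neg h0, if_pos (Finsupp.single_le_iff.mpr (by omega)),
          if_pos (Finsupp.single_le_iff.mpr h2'), hcoeff_g1,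
          if_neg (by rw [Finsupp.tsub_apply, Finsupp.single_eq_same]; omega), hcoeff_c,
          Stmt2Aux.sub_add_single_cancel h2']
        ring
  set S := Finset.univ.filter (fun i : Fin (d + 1) => i ≠ 0) with hS
  -- memberships
  have hg1J : g1 ∈ Stmt2Aux.Jw k d S 2 := by
    intro m hm
    rw [hcoeff_g1]
    split_ifs with h0
    · apply hGc
      rw [hshift m 1, Stmt2Aux.sum_split m, ← hS, h0]
      omega
    · rfl
  have hg0J : g0 ∈ Stmt2Aux.Jw k d S 3 := by
    intro m hm
    rw [hcoeff_g0]
    split_ifs with h0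
    · apply hGc
      rw [Stmt2Aux.sum_split m, ← hS, h0]
      omega
    · rfl
  have hg1I : g1 ∈ I ^ 2 := Stmt2Aux.mem_pow_span 2 g1 hg1J
  have hg0I : g0 ∈ I ^ 3 := Stmt2Aux.mem_pow_span 3 g0 hg0J
  -- the unit
  have hu : IsUnit (1 + c) := by
    rw [MvPowerSeries.isUnit_iff_constantCoeff, map_add, map_one]
    have hc0 : constantCoeff c = 0 := by
      rw [← coeff_zero_eq_constantCoeff, hcoeff_c]
      apply hGc
      rw [hshift 0 2]
      simp
    rw [hc0, add_zero]
    exact isUnit_one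
  set w : MvPowerSeries (Fin (d + 1)) k := ↑hu.unit⁻¹ with hwdef
  have hw : (1 + c) * w = 1 := hu.mul_val_inv
  set i2 : MvPowerSeries (Fin (d + 1)) k := C ↑h2.unit⁻¹ with hi2
  have h2' : (2 : MvPowerSeries (Fin (d + 1)) k) * i2 = 1 := by
    have hC2 : (C : k →+* MvPowerSeries (Fin (d + 1)) k) 2 = 2 := map_ofNat _ 2
    rw [← hC2, hi2, ← map_mul, h2.mul_val_inv, map_one]
  refine ⟨hu.unit, i2 * g1 * w, g0 - i2 * i2 * (g1 * g1) * w, ?_, ?_, ?_⟩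
  · exact Ideal.mul_mem_right w _ (Ideal.mul_mem_left _ i2
      (Ideal.pow_le_self two_ne_zero hg1I))
  · refine sub_mem hg0I ?_
    refine Ideal.mul_mem_right w _ (Ideal.mul_mem_left _ _ ?_)
    have h4 : g1 * g1 ∈ I ^ 2 * I ^ 2 := Ideal.mul_mem_mul hg1I hg1I
    have he : I ^ 2 * I ^ 2 = I ^ 4 := by ring
    rw [he] at h4
    exact Ideal.pow_le_pow_right (by omega) h4
  · rw [hF, hdec, Stmt2Aux.sum_split (fun i : Fin (d + 1) => (X i : MvPowerSeries (Fin (d + 1)) k) ^ 2),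
      hu.unit_spec]
    linear_combination (-(X (0 : Fin (d + 1)) * g1)) * h2' +
      (-(2 * X (0 : Fin (d + 1)) * g1 * i2) - i2 * i2 * (g1 * g1) * w) * hw
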